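/- For every countable subgroup S of the multiplicative group of positive real numbers there exist a nonempty countable index set I and a family (tᵢ)_{i∈I} of real numbers with tᵢ > 0 for all i ∈ I and ∑_{i∈I} tᵢ = 1, such that the subgroup of the positive reals generated by the set of ratios {tᵢ/tⱼ : i, j ∈ I} is exactly S. -/

import Mathlib

/-- For every countable subgroup `S` of the multiplicative group of positive reals
there is a nonempty countable family `(tᵢ)` of positive reals with `∑ᵢ tᵢ = 1`
whose ratio group `⟨tᵢ/tⱼ⟩` is exactly `S`. -/
theorem exists_weights_with_ratio_group (S : Subgroup {x : ℝ // 0 < x})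
    (hS : Countable S) :
    ∃ (I : Type) (_ : Countable I) (_ : Nonempty I) (t : I → {x : ℝ // 0 < x}),
      HasSum (fun i => (t i : ℝ)) 1 ∧
      Subgroup.closure {r : {x : ℝ // 0 < x} | ∃ i j, r = t i / t j} = S := by
  by_cases hbot : S = ⊥
  · refine ⟨Unit, inferInstance, ⟨()⟩, fun _ => 1, ?_, ?_⟩
    · simpa using hasSum_fintype (fun _ : Unit => (1 : ℝ))
    · have hset : {r : {x : ℝ // 0 < x} | ∃ i j : Unit, r = (fun _ => 1) i / (fun _ => 1) j}
          = ({1} : Set {x : ℝ // 0 < x}) := by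
        ext r; simp
      rw [hset, Subgroup.closure_singleton_one, hbot]
  · -- nontrivial case
    obtain ⟨a, ha1⟩ := Subgroup.ne_bot_iff_exists_ne_one.mp hbot
    -- an element b of S with value < 1
    set b : {x : ℝ // 0 < x} := if ((a : {x : ℝ // 0 < x}) : ℝ) < 1 then a else a⁻¹ with hbdef
    have hbS : b ∈ S := by
      rw [hbdef]
      split_ifs
      · exact a.2
      · exact inv_mem a.2
    have hbpos : (0:ℝ) < (b : ℝ) := b.2
    have hblt : ((b : {x : ℝ // 0 < x}) : ℝ) < 1 := by
      by_cases h : ((a : {x : ℝ // 0 < x}) : ℝ) < 1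
      · simpa [hbdef, h]
      · have hane : ((a : {x : ℝ // 0 < x}) : ℝ) ≠ 1 := by
          intro hh
          exact ha1 (Subtype.ext (Subtype.ext hh))
        have hagt : (1:ℝ) < ((a : {x : ℝ // 0 < x}) : ℝ) :=
          lt_of_le_of_ne (not_lt.mp h) (Ne.symm hane)
        have : ((a⁻¹ : {x : ℝ // 0 < x}) : ℝ) = ((a : {x : ℝ // 0 < x}) : ℝ)⁻¹ := rfl
        simp only [hbdef, if_neg h]
        rw [this]
        exact inv_lt_one_of_one_lt₀ hagt
    obtain ⟨f, hf⟩ := exists_surjective_nat S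
    set s : ℕ → ℝ := fun n => ((f n : {x : ℝ // 0 < x}) : ℝ) with hsdef
    have hspos : ∀ n, 0 < s n := fun n => (f n : {x : ℝ // 0 < x}).2
    -- choose exponents
    have hexists : ∀ n : ℕ, ∃ k : ℕ, ((b : ℝ)) ^ k < (1/2 : ℝ) ^ n / (1 + s n) := by
      intro n
      exact exists_pow_lt_of_lt_one
        (div_pos (by positivity) (by have := hspos n; linarith)) hblt
    choose k hk using hexists
    set c : ℕ → {x : ℝ // 0 < x} := fun n => b ^ (k n) with hcdef
    have hcS : ∀ n, c n ∈ S := fun n => pow_mem hbS _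
    have hpow : ∀ m : ℕ, ((b ^ m : {x : ℝ // 0 < x}) : ℝ) = (b : ℝ) ^ m := by
      intro m
      induction m with
      | zero => rfl
      | succ m ih => rw [pow_succ, pow_succ, ← ih]; rfl
    have hcval : ∀ n, ((c n : {x : ℝ // 0 < x}) : ℝ) = (b : ℝ) ^ (k n) := fun n => hpow (k n)
    -- the family in S
    set w : ℕ × Bool → S := fun p =>
      if p.2 then ⟨c p.1, hcS p.1⟩ * f p.1 else ⟨c p.1, hcS p.1⟩ with hwdef
    set u : ℕ × Bool → ℝ := fun p => ((w p : {x : ℝ // 0 < x}) : ℝ) with hudef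
    have hupos : ∀ p, 0 < u p := fun p => ((w p : {x : ℝ // 0 < x})).2
    have huval : ∀ n : ℕ, u (n, false) = (b : ℝ) ^ (k n) ∧
        u (n, true) = (b : ℝ) ^ (k n) * s n := by
      intro n
      constructor
      · simp only [hudef, hwdef]; simpa using hcval n
      · simp only [hudef, hwdef]
        have : ((( ⟨c n, hcS n⟩ * f n : S) : {x : ℝ // 0 < x}) : ℝ)
            = ((c n : {x : ℝ // 0 < x}) : ℝ) * s n := rfl
        exact congrArg (· * s n) (hcval n)
    have hub : ∀ p : ℕ × Bool, u p ≤ (1/2 : ℝ) ^ p.1 := by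
      rintro ⟨n, bb⟩
      have hkn := hk n
      have h1 : (0:ℝ) < 1 + s n := by have := hspos n; linarith
      have hle : (b : ℝ) ^ (k n) * (1 + s n) < (1/2 : ℝ) ^ n := by
        rw [← lt_div_iff₀ h1]; exact hkn
      have hbk : (0:ℝ) < (b : ℝ) ^ (k n) := by positivity
      cases bb
      · have := (huval n).1
        rw [this]
        nlinarith [hspos n]
      · have := (huval n).2
        rw [this]
        nlinarith [hspos n]
    have husum : Summable u := by
      rw [summable_prod_of_nonneg (fun p => (hupos p).le)]
      constructor
      · intro n; exact Summable.of_finite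
      · apply Summable.of_nonneg_of_le (fun n => tsum_nonneg (fun bb => (hupos (n, bb)).le))
          (fun n => ?_) (Summable.mul_left 2 summable_geometric_two)
        rw [tsum_bool]
        have h1 := hub (n, false)
        have h2 := hub (n, true)
        simp only at h1 h2 ⊢
        linarith
    set T : ℝ := ∑' p, u p with hTdef
    have hT : HasSum u T := husum.hasSum
    have hTpos : 0 < T := Summable.tsum_pos husum (fun p => (hupos p).le) (0, false) (hupos _)
    refine ⟨ℕ × Bool, inferInstance, ⟨(0, false)⟩,
      fun p => ⟨u p / T, div_pos (hupos p) hTpos⟩, ?_, ?_⟩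
    · have := hT.div_const T
      simpa [div_self hTpos.ne'] using this
    · apply le_antisymm
      · rw [Subgroup.closure_le]
        rintro r ⟨i, j, rfl⟩
        have : (⟨u i / T, div_pos (hupos i) hTpos⟩ / ⟨u j / T, div_pos (hupos j) hTpos⟩
            : {x : ℝ // 0 < x}) = (w i : {x : ℝ // 0 < x}) / (w j : {x : ℝ // 0 < x}) := by
          apply Subtype.ext
          show (u i / T) / (u j / T) = u i / u j
          field_simp
        simp only [this]
        exact div_mem (w i).2 (w j).2
      · intro x hx
        obtain ⟨n, hn⟩ := hf ⟨x, hx⟩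
        apply Subgroup.subset_closure
        refine ⟨(n, true), (n, false), ?_⟩
        apply Subtype.ext
        show (x : ℝ) = (u (n, true) / T) / (u (n, false) / T)
        have h1 := (huval n).1
        have h2 := (huval n).2
        have hxs : (x : ℝ) = s n := by rw [hsdef]; simp [hn]
        rw [h1, h2, hxs]
        have hbk : (0:ℝ) < (b : ℝ) ^ (k n) := by positivity
        field_simp
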